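/- Let E be a finite-dimensional real inner product space, let L : E → ℝ be concave and twice continuously differentiable, let θ₀ ∈ E, ε > 0, κ > 0, and set r = 2ε/κ. Assume ‖∇L(θ₀)‖ ≤ ε, and that for every θ ∈ E with ‖θ − θ₀‖ ≤ r and every v ∈ E, the second derivative satisfies L″(θ)[v, v] ≤ −κ ‖v‖². Then every θ* ∈ E with L(θ*) ≥ L(θ₀) (in particular, every global maximizer of L) satisfies ‖θ* − θ₀‖ ≤ r = 2ε/κ. -/

import Mathlib

open Real

/-- Deterministic localization lemma for concave maximization: a small gradient at `θ₀`
together with uniformly negative curvature on the ball of radius `2ε/κ` forces any point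
with criterion value at least `L θ₀` (in particular any maximizer) into that ball. -/
theorem concave_maximizer_localization
    {E : Type*} [NormedAddCommGroup E] [InnerProductSpace ℝ E] [FiniteDimensional ℝ E]
    (L : E → ℝ) (θ₀ : E) (ε κ : ℝ) (hε : 0 < ε) (hκ : 0 < κ)
    (hconc : ConcaveOn ℝ Set.univ L) (hsmooth : ContDiff ℝ 2 L)
    (hgrad : ‖gradient L θ₀‖ ≤ ε)
    (hcurv : ∀ θ : E, ‖θ - θ₀‖ ≤ 2 * ε / κ →
      ∀ v : E, iteratedFDeriv ℝ 2 L θ ![v, v] ≤ -κ * ‖v‖ ^ 2) :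
    ∀ θs : E, L θ₀ ≤ L θs → ‖θs - θ₀‖ ≤ 2 * ε / κ := by
  intro θs hLs
  by_contra hcon
  push_neg at hcon
  set r : ℝ := 2 * ε / κ with hr
  have hr0 : 0 < r := by positivity
  set T : ℝ := ‖θs - θ₀‖ with hT
  have hT0 : 0 < T := lt_trans hr0 hcon
  set u : E := T⁻¹ • (θs - θ₀) with hu
  have hnu : ‖u‖ = 1 := by
    rw [hu, norm_smul, norm_inv, norm_norm, ← hT, inv_mul_cancel₀ hT0.ne']
  -- the line through θ₀ in direction u
  set γ : ℝ → E := fun t => θ₀ + t • u with hγ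
  have hγd : ∀ t : ℝ, HasDerivAt γ u t := by
    intro t
    simpa [hγ] using ((hasDerivAt_id t).smul_const u).const_add θ₀
  have hγsub : ∀ t : ℝ, γ t - θ₀ = t • u := by intro t; simp [hγ]
  have hγnorm : ∀ t : ℝ, ‖γ t - θ₀‖ = |t| := by
    intro t; rw [hγsub, norm_smul, hnu, mul_one, Real.norm_eq_abs]
  set g : ℝ → ℝ := fun t => L (γ t) with hg
  have hL1 : Differentiable ℝ L := hsmooth.differentiable (by norm_num)
  set G : ℝ → ℝ := fun t => (fderiv ℝ L (γ t)) u with hG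
  have hgd : ∀ t : ℝ, HasDerivAt g (G t) t := fun t =>
    (hL1 (γ t)).hasFDerivAt.comp_hasDerivAt t (hγd t)
  -- second derivative along the line
  have hF : ContDiff ℝ 1 (fderiv ℝ L) := hsmooth.fderiv_right (by norm_num)
  have hGd : ∀ t : ℝ, HasDerivAt G ((fderiv ℝ (fderiv ℝ L) (γ t) u) u) t := by
    intro t
    have h1 : HasDerivAt (fun s => fderiv ℝ L (γ s)) (fderiv ℝ (fderiv ℝ L) (γ t) u) t :=
      (hF.differentiable (by norm_num) (γ t)).hasFDerivAt.comp_hasDerivAt t (hγd t)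
    simpa using h1.clm_apply (hasDerivAt_const t u)
  have hcurv' : ∀ t : ℝ, t ∈ Set.Icc (0:ℝ) r →
      (fderiv ℝ (fderiv ℝ L) (γ t) u) u ≤ -κ := by
    intro t ht
    have hnorm : ‖γ t - θ₀‖ ≤ r := by
      rw [hγnorm, abs_of_nonneg ht.1]; exact ht.2
    have := hcurv (γ t) hnorm u
    rw [iteratedFDeriv_two_apply] at this
    simpa [hnu] using this
  -- G 0 ≤ ε
  have hG0 : G 0 ≤ ε := by
    have hgr : HasGradientAt L (gradient L θ₀) θ₀ := (hL1 θ₀).hasGradientAt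
    have hfd : fderiv ℝ L θ₀ = InnerProductSpace.toDual ℝ E (gradient L θ₀) :=
      (hasGradientAt_iff_hasFDerivAt.mp hgr).fderiv
    have hγ0 : γ 0 = θ₀ := by simp [hγ]
    calc G 0 = (inner ℝ (gradient L θ₀) u : ℝ) := by
          show (fderiv ℝ L (γ 0)) u = _
          rw [hγ0, hfd]; exact InnerProductSpace.toDual_apply_apply
      _ ≤ ‖gradient L θ₀‖ * ‖u‖ := real_inner_le_norm _ _
      _ ≤ ε := by rw [hnu, mul_one]; exact hgrad
  -- G t ≤ ε - κ t on [0, r]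
  have hlin : ∀ t : ℝ, HasDerivAt (fun s : ℝ => s * κ) κ t := fun t => hasDerivAt_mul_const κ
  have hψd : ∀ t : ℝ, HasDerivAt (fun s => G s + s * κ)
      ((fderiv ℝ (fderiv ℝ L) (γ t) u) u + κ) t := fun t => (hGd t).add (hlin t)
  have hGle : ∀ t ∈ Set.Icc (0:ℝ) r, G t ≤ ε - κ * t := by
    have hmono : AntitoneOn (fun s => G s + s * κ) (Set.Icc 0 r) := by
      apply antitoneOn_of_deriv_nonpos (convex_Icc 0 r)
      · exact Continuous.continuousOn
          (continuous_iff_continuousAt.mpr fun t => (hψd t).differentiableAt.continuousAt)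
      · intro t _
        exact (hψd t).differentiableAt.differentiableWithinAt
      · intro t ht
        rw [interior_Icc] at ht
        rw [(hψd t).deriv]
        have := hcurv' t ⟨le_of_lt ht.1, le_of_lt ht.2⟩
        linarith
    intro t ht
    have h := hmono (Set.left_mem_Icc.mpr hr0.le) ht ht.1
    simp only at h
    nlinarith [hG0]
  -- g r ≤ g 0
  have hquad : ∀ t : ℝ, HasDerivAt (fun s : ℝ => κ * s ^ 2 / 2) (κ * t) t := by
    intro t
    have h := ((hasDerivAt_pow 2 t).const_mul κ).div_const 2
    refine h.congr_deriv ?_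
    push_cast; ring
  have hεlin : ∀ t : ℝ, HasDerivAt (fun s : ℝ => s * ε) ε t := fun t => hasDerivAt_mul_const ε
  have hχd : ∀ t : ℝ, HasDerivAt (fun s => g s - s * ε + κ * s ^ 2 / 2)
      (G t - ε + κ * t) t := fun t => ((hgd t).sub (hεlin t)).add (hquad t)
  have hgr0 : g r ≤ g 0 := by
    have hmono : AntitoneOn (fun s => g s - s * ε + κ * s ^ 2 / 2) (Set.Icc 0 r) := by
      apply antitoneOn_of_deriv_nonpos (convex_Icc 0 r)
      · exact Continuous.continuousOn
          (continuous_iff_continuousAt.mpr fun t => (hχd t).differentiableAt.continuousAt)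
      · intro t _
        exact (hχd t).differentiableAt.differentiableWithinAt
      · intro t ht
        rw [interior_Icc] at ht
        rw [(hχd t).deriv]
        have := hGle t ⟨ht.1.le, ht.2.le⟩
        linarith
    have h := hmono (Set.left_mem_Icc.mpr hr0.le) (Set.right_mem_Icc.mpr hr0.le) hr0.le
    simp only at h
    have hcancel : r * ε - κ * r ^ 2 / 2 = 0 := by
      rw [hr]; field_simp; ring
    nlinarith
  -- concavity of g
  have hgconc : ConcaveOn ℝ Set.univ g := by
    have := hconc.comp_affineMap (AffineMap.lineMap θ₀ (θ₀ + u))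
    have heq : (L ∘ (AffineMap.lineMap θ₀ (θ₀ + u) : ℝ →ᵃ[ℝ] E)) = g := by
      funext t
      show L _ = L (θ₀ + t • u)
      rw [AffineMap.lineMap_apply]
      simp [add_comm]
    rw [heq] at this
    simpa using this
  -- slope bound beyond r
  have hslope : slope g r T ≤ G r :=
    hgconc.slope_le_of_hasDerivAt (Set.mem_univ r) (Set.mem_univ T) hcon (hgd r)
  have hGr : G r ≤ -ε := by
    have := hGle r (Set.right_mem_Icc.mpr hr0.le)
    have : G r ≤ ε - κ * r := this
    have hκr : κ * r = 2 * ε := by rw [hr]; field_simp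
    linarith
  have hgT : g T = L θs := by
    have : γ T = θs := by
      rw [hγ]; simp only [hu, smul_smul, mul_inv_cancel₀ hT0.ne', one_smul]
      abel
    show L (γ T) = L θs
    rw [this]
  have hg0 : g 0 = L θ₀ := by simp [hg, hγ]
  -- contradiction
  rw [slope_def_field] at hslope
  have hTr : 0 < T - r := by linarith
  have : g T - g r ≤ G r * (T - r) := by
    rw [div_le_iff₀ hTr] at hslope
    · linarith [hslope]
  nlinarith [hLs, hgr0, hgT, hg0, hGr, hTr]
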